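/- Let n ≥ 2 and let S be a maximal triangle-free subgraph of 𝒟_n. Then every vertex of S has at most 4 neighbours in S. Moreover, if a vertex v ∈ S has two distinct neighbours a, b ∈ S with a ≠ b*, then v has exactly four neighbours in S, namely a, b, a*, b*. -/
import Mathlib


/-- The `i`th standard basis vector of `ℤⁿ`. -/
def stdVec (n : ℕ) (i : Fin n) : Fin n → ℤ := Pi.single i 1

/-- Integer dot product. -/
def dotZ {n : ℕ} (u v : Fin n → ℤ) : ℤ := ∑ k, u k * v k

/-- Vertices of the signed graph `𝒟_n`: vectors `e_i ± e_j` for `i < j`. -/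
def DnVertex {n : ℕ} (v : Fin n → ℤ) : Prop :=
  ∃ i j : Fin n, i < j ∧
    (v = stdVec n i + stdVec n j ∨ v = stdVec n i - stdVec n j)

/-- Adjacency in `𝒟_n`: distinct vectors with nonzero inner product. -/
def DnAdj {n : ℕ} (u v : Fin n → ℤ) : Prop := u ≠ v ∧ dotZ u v ≠ 0

/-- A set of vertices is triangle-free if it contains no three pairwise adjacent vertices. -/
def TriangleFree {n : ℕ} (S : Set (Fin n → ℤ)) : Prop :=
  ¬ ∃ a b c, a ∈ S ∧ b ∈ S ∧ c ∈ S ∧ DnAdj a b ∧ DnAdj a c ∧ DnAdj b c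

/-- `S` is a maximal triangle-free subgraph of `𝒟_n`: a triangle-free set of vertices of
`𝒟_n` such that adjoining any further vertex of `𝒟_n` creates a triangle. -/
def MaximalTriangleFree {n : ℕ} (S : Set (Fin n → ℤ)) : Prop :=
  (∀ v ∈ S, DnVertex v) ∧ TriangleFree S ∧
    ∀ v, DnVertex v → v ∉ S → ¬ TriangleFree (insert v S)

/-- `b` is the conjugate `a*` of `a`: one of them is `e_i + e_j` and the other
`e_i − e_j` (with `i < j`). -/
def DnConj {n : ℕ} (a b : Fin n → ℤ) : Prop :=
  ∃ i j : Fin n, i < j ∧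
    ((a = stdVec n i + stdVec n j ∧ b = stdVec n i - stdVec n j) ∨
     (a = stdVec n i - stdVec n j ∧ b = stdVec n i + stdVec n j))


def vec (n : ℕ) (i j : Fin n) (e : ℤ) : Fin n → ℤ := Pi.single i 1 + Pi.single j e

lemma vec_apply {n : ℕ} (i j k : Fin n) (e : ℤ) :
    vec n i j e k = (if k = i then 1 else 0) + (if k = j then e else 0) := by
  simp [vec, Pi.single_apply]

lemma dot_single_single {n : ℕ} (i j : Fin n) (a b : ℤ) :
    dotZ (Pi.single i a) (Pi.single j b) = if i = j then a * b else 0 := by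
  classical
  rw [dotZ]
  rw [Finset.sum_eq_single i]
  · by_cases h : i = j <;> simp [Pi.single_apply, h]
  · intro k _ hk; simp [Pi.single_apply, hk, Ne.symm hk]
  · simp

lemma dotZ_add_left {n : ℕ} (u u' v : Fin n → ℤ) :
    dotZ (u + u') v = dotZ u v + dotZ u' v := by
  simp [dotZ, add_mul, Finset.sum_add_distrib]

lemma dotZ_add_right {n : ℕ} (u v v' : Fin n → ℤ) :
    dotZ u (v + v') = dotZ u v + dotZ u v' := by
  simp [dotZ, mul_add, Finset.sum_add_distrib]

lemma dotZ_comm {n : ℕ} (u v : Fin n → ℤ) : dotZ u v = dotZ v u := by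
  simp [dotZ, mul_comm]

lemma dot_vec {n : ℕ} (i j p q : Fin n) (a b : ℤ) :
    dotZ (vec n i j a) (vec n p q b) =
      (if i = p then 1 else 0) + (if i = q then b else 0) +
      (if j = p then a else 0) + (if j = q then a * b else 0) := by
  rw [vec, vec, dotZ_add_left, dotZ_add_right, dotZ_add_right,
    dot_single_single, dot_single_single, dot_single_single, dot_single_single]
  split_ifs <;> ring

lemma vec_one {n : ℕ} (i j : Fin n) : vec n i j 1 = stdVec n i + stdVec n j := rfl

lemma vec_neg_one {n : ℕ} (i j : Fin n) : vec n i j (-1) = stdVec n i - stdVec n j := by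
  funext k
  simp [vec, stdVec, Pi.single_apply]
  split_ifs <;> ring

lemma dnVertex_iff {n : ℕ} (v : Fin n → ℤ) :
    DnVertex v ↔ ∃ i j : Fin n, i < j ∧ ∃ e : ℤ, (e = 1 ∨ e = -1) ∧ v = vec n i j e := by
  constructor
  · rintro ⟨i, j, hij, h | h⟩
    · exact ⟨i, j, hij, 1, Or.inl rfl, by rw [vec_one]; exact h⟩
    · exact ⟨i, j, hij, -1, Or.inr rfl, by rw [vec_neg_one]; exact h⟩
  · rintro ⟨i, j, hij, e, (rfl | rfl), rfl⟩
    · exact ⟨i, j, hij, Or.inl (vec_one i j)⟩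
    · exact ⟨i, j, hij, Or.inr (vec_neg_one i j)⟩

lemma vec_inj {n : ℕ} {i j p q : Fin n} {a b : ℤ}
    (hij : i < j) (hpq : p < q) (ha : a = 1 ∨ a = -1) (hb : b = 1 ∨ b = -1)
    (h : vec n i j a = vec n p q b) : i = p ∧ j = q ∧ a = b := by
  have h1 := congrFun h i
  have h2 := congrFun h j
  simp [vec_apply, Fin.ne_of_lt hij, Fin.ne_of_gt hij] at h1 h2
  have hij' : (i : ℕ) < j := hij
  have hpq' : (p : ℕ) < q := hpq
  simp only [← Fin.val_eq_val] at h1 h2 ⊢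
  rcases ha with rfl | rfl <;> rcases hb with rfl | rfl <;>
    (split_ifs at h1 h2 <;> omega)

lemma dnConj_vec {n : ℕ} {i j : Fin n} {e : ℤ} (hij : i < j) (he : e = 1 ∨ e = -1) :
    DnConj (vec n i j e) (vec n i j (-e)) := by
  rcases he with rfl | rfl
  · exact ⟨i, j, hij, Or.inl ⟨vec_one i j, vec_neg_one i j⟩⟩
  · exact ⟨i, j, hij, Or.inr ⟨vec_neg_one i j, by rw [neg_neg]; exact vec_one i j⟩⟩

lemma dnConj_iff {n : ℕ} (a b : Fin n → ℤ) :
    DnConj a b ↔ ∃ i j : Fin n, i < j ∧ ∃ e : ℤ, (e = 1 ∨ e = -1) ∧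
      a = vec n i j e ∧ b = vec n i j (-e) := by
  constructor
  · rintro ⟨i, j, hij, ⟨rfl, rfl⟩ | ⟨rfl, rfl⟩⟩
    · exact ⟨i, j, hij, 1, Or.inl rfl, (vec_one i j).symm, (vec_neg_one i j).symm⟩
    · exact ⟨i, j, hij, -1, Or.inr rfl, (vec_neg_one i j).symm, by rw [neg_neg]; exact (vec_one i j).symm⟩
  · rintro ⟨i, j, hij, e, he, rfl, rfl⟩
    exact dnConj_vec hij he

lemma dnConj_symm {n : ℕ} {a b : Fin n → ℤ} (h : DnConj a b) : DnConj b a := by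
  obtain ⟨i, j, hij, h | h⟩ := h
  · exact ⟨i, j, hij, Or.inr ⟨h.2, h.1⟩⟩
  · exact ⟨i, j, hij, Or.inl ⟨h.2, h.1⟩⟩

lemma dnConj_unique {n : ℕ} {i j : Fin n} {e : ℤ} {c : Fin n → ℤ}
    (hij : i < j) (he : e = 1 ∨ e = -1) (h : DnConj (vec n i j e) c) :
    c = vec n i j (-e) := by
  rw [dnConj_iff] at h
  obtain ⟨p, q, hpq, d, hd, h1, h2⟩ := h
  obtain ⟨rfl, rfl, rfl⟩ := vec_inj hij hpq he hd h1
  exact h2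

lemma dnAdj_symm {n : ℕ} {u v : Fin n → ℤ} (h : DnAdj u v) : DnAdj v u :=
  ⟨h.1.symm, by rw [dotZ_comm]; exact h.2⟩

lemma sum_vec {n : ℕ} {i j : Fin n} (e : ℤ) (hij : i ≠ j) :
    ∑ k, vec n i j e k = 1 + e := by
  simp [vec, Finset.sum_add_distrib, Pi.single_apply, Finset.sum_ite_eq]

lemma vec_coord_ne {n : ℕ} {p q : Fin n} {d : ℤ} (hpq : p < q) (hd : d = 1 ∨ d = -1)
    (i : Fin n) : vec n p q d i ≠ 0 ↔ ((i : ℕ) = p ∨ (i : ℕ) = q) := by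
  rw [vec_apply]
  have hpq' : (p : ℕ) < q := hpq
  simp only [← Fin.val_eq_val]
  rcases hd with rfl | rfl <;> (split_ifs <;> omega)

/-- If two vertices share an index and are orthogonal, they are conjugates. -/
lemma orth_shared {n : ℕ} {i j p q : Fin n} {e d : ℤ}
    (hij : i < j) (hpq : p < q) (he : e = 1 ∨ e = -1) (hd : d = 1 ∨ d = -1)
    (hdot : dotZ (vec n i j e) (vec n p q d) = 0)
    (hsh : (i : ℕ) = p ∨ (i : ℕ) = q ∨ (j : ℕ) = p ∨ (j : ℕ) = q) :
    (i : ℕ) = p ∧ (j : ℕ) = q ∧ d = -e := by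
  rw [dot_vec] at hdot
  have hij' : (i : ℕ) < j := hij
  have hpq' : (p : ℕ) < q := hpq
  simp only [← Fin.val_eq_val] at hdot
  rcases he with rfl | rfl <;> rcases hd with rfl | rfl <;>
    (split_ifs at hdot <;> omega)

/-- A neighbour shares exactly one index. -/
lemma adj_shares {n : ℕ} {i j p q : Fin n} {e d : ℤ}
    (hij : i < j) (hpq : p < q) (he : e = 1 ∨ e = -1) (hd : d = 1 ∨ d = -1)
    (hne : vec n i j e ≠ vec n p q d)
    (hdot : dotZ (vec n i j e) (vec n p q d) ≠ 0) :
    (((i : ℕ) = p ∨ (i : ℕ) = q) ∧ ¬((j : ℕ) = p ∨ (j : ℕ) = q)) ∨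
    (¬((i : ℕ) = p ∨ (i : ℕ) = q) ∧ ((j : ℕ) = p ∨ (j : ℕ) = q)) := by
  have hne' : ¬((i : ℕ) = p ∧ (j : ℕ) = q ∧ e = d) := by
    rintro ⟨h1, h2, h3⟩
    exact hne (by rw [show i = p from Fin.ext h1, show j = q from Fin.ext h2, h3])
  rw [dot_vec] at hdot
  have hij' : (i : ℕ) < j := hij
  have hpq' : (p : ℕ) < q := hpq
  simp only [← Fin.val_eq_val] at hdot
  rcases he with rfl | rfl <;> rcases hd with rfl | rfl <;>
    (split_ifs at hdot <;> omega)

/-- Conjugates have the same neighbours (other than themselves). -/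
lemma dot_conj_ne_zero {n : ℕ} {i j p q : Fin n} {e d : ℤ}
    (hij : i < j) (hpq : p < q) (he : e = 1 ∨ e = -1) (hd : d = 1 ∨ d = -1)
    (hne : ¬((i : ℕ) = p ∧ (j : ℕ) = q))
    (h : dotZ (vec n i j e) (vec n p q d) ≠ 0) :
    dotZ (vec n i j (-e)) (vec n p q d) ≠ 0 := by
  rw [dot_vec] at h ⊢
  have hij' : (i : ℕ) < j := hij
  have hpq' : (p : ℕ) < q := hpq
  simp only [← Fin.val_eq_val] at h ⊢
  rcases he with rfl | rfl <;> rcases hd with rfl | rfl <;>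
    (split_ifs at h ⊢ <;> omega)

lemma tf_orth {n : ℕ} {S : Set (Fin n → ℤ)} (hTF : TriangleFree S)
    {v w w' : Fin n → ℤ} (hv : v ∈ S) (hw : w ∈ S) (hw' : w' ∈ S)
    (h1 : DnAdj v w) (h2 : DnAdj v w') (hne : w ≠ w') : dotZ w w' = 0 := by
  by_contra h
  exact hTF ⟨v, w, w', hv, hw, hw', h1, h2, hne, h⟩

lemma insert_triangle {n : ℕ} {S : Set (Fin n → ℤ)} {u : Fin n → ℤ}
    (hTF : TriangleFree S) (h : ¬ TriangleFree (insert u S)) (hu : u ∉ S) :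
    ∃ x y, x ∈ S ∧ y ∈ S ∧ DnAdj u x ∧ DnAdj u y ∧ DnAdj x y := by
  rw [TriangleFree, not_not] at h
  obtain ⟨a, b, c, ha, hb, hc, hab, hac, hbc⟩ := h
  rcases Set.mem_insert_iff.mp ha with ha | ha <;>
    rcases Set.mem_insert_iff.mp hb with hb | hb <;>
      rcases Set.mem_insert_iff.mp hc with hc | hc
  · exact absurd (ha.trans hb.symm) hab.1
  · exact absurd (ha.trans hb.symm) hab.1
  · exact absurd (ha.trans hc.symm) hac.1
  · exact ⟨b, c, hb, hc, ha ▸ hab, ha ▸ hac, hbc⟩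
  · exact absurd (hb.trans hc.symm) hbc.1
  · exact ⟨a, c, ha, hc, dnAdj_symm (hb ▸ hab), hb ▸ hbc, hac⟩
  · exact ⟨a, b, ha, hb, dnAdj_symm (hc ▸ hac), dnAdj_symm (hc ▸ hbc), hab⟩
  · exact absurd ⟨a, b, c, ha, hb, hc, hab, hac, hbc⟩ hTF

/-- In a maximal triangle-free set, the conjugate of any member is a member. -/
lemma conj_mem {n : ℕ} {S : Set (Fin n → ℤ)} (hS : MaximalTriangleFree S)
    {i j : Fin n} {e : ℤ} (hij : i < j) (he : e = 1 ∨ e = -1)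
    (haS : vec n i j e ∈ S) : vec n i j (-e) ∈ S := by
  by_contra h
  have he' : -e = 1 ∨ -e = -1 := by rcases he with rfl | rfl <;> simp
  have hvert : DnVertex (vec n i j (-e)) :=
    (dnVertex_iff _).mpr ⟨i, j, hij, -e, he', rfl⟩
  obtain ⟨x, y, hx, hy, hux, huy, hxy⟩ :=
    insert_triangle hS.2.1 (hS.2.2 _ hvert h) h
  -- x and y are adjacent to `vec n i j e` as well
  have key : ∀ z ∈ S, DnAdj (vec n i j (-e)) z → DnAdj (vec n i j e) z := by
    intro z hz hadj
    obtain ⟨p, q, hpq, d, hd, rfl⟩ := (dnVertex_iff z).mp (hS.1 z hz)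
    have hsupp : ¬((i : ℕ) = p ∧ (j : ℕ) = q) := by
      rintro ⟨h1, h2⟩
      have hip : i = p := Fin.ext h1
      have hjq : j = q := Fin.ext h2
      subst hip; subst hjq
      rcases he with rfl | rfl <;> rcases hd with h3 | h3 <;> rw [h3] at hadj hz
      · exact hadj.2 (by rw [dot_vec]; simp [Fin.ne_of_lt hij, Fin.ne_of_gt hij])
      · exact h hz
      · exact h hz
      · exact hadj.2 (by rw [dot_vec]; simp [Fin.ne_of_lt hij, Fin.ne_of_gt hij])
    refine ⟨?_, ?_⟩
    · intro heq
      obtain ⟨h1, h2, -⟩ := vec_inj hij hpq he hd heq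
      exact hsupp ⟨congrArg Fin.val h1, congrArg Fin.val h2⟩
    · have := dot_conj_ne_zero hij hpq he' hd hsupp hadj.2
      rwa [neg_neg] at this
  exact hS.2.1 ⟨_, x, y, haS, hx, hy, key x hx hux, key y hy huy, hxy⟩

lemma adj_supp_ne {n : ℕ} {i j p q : Fin n} {e d : ℤ}
    (hij : i < j) (hpq : p < q) (he : e = 1 ∨ e = -1) (hd : d = 1 ∨ d = -1)
    (h : DnAdj (vec n i j e) (vec n p q d)) : ¬((i : ℕ) = p ∧ (j : ℕ) = q) := by
  rintro ⟨h1, h2⟩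
  obtain rfl : i = p := Fin.ext h1
  obtain rfl : j = q := Fin.ext h2
  rcases he with rfl | rfl <;> rcases hd with rfl | rfl
  · exact h.1 rfl
  · exact h.2 (by rw [dot_vec]; simp [Fin.ne_of_lt hij, Fin.ne_of_gt hij])
  · exact h.2 (by rw [dot_vec]; simp [Fin.ne_of_lt hij, Fin.ne_of_gt hij])
  · exact h.1 rfl

lemma deg_le_four {n : ℕ} {S : Set (Fin n → ℤ)} (hS : MaximalTriangleFree S)
    {v : Fin n → ℤ} (hv : v ∈ S) : Set.ncard {w ∈ S | DnAdj v w} ≤ 4 := by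
  classical
  obtain ⟨i, j, hij, e, he, rfl⟩ := (dnVertex_iff v).mp (hS.1 v hv)
  have hinj : Set.InjOn (fun w : Fin n → ℤ => (decide (w i ≠ 0), decide (∑ k, w k = 0)))
      {w ∈ S | DnAdj (vec n i j e) w} := by
    rintro w ⟨hwS, hwadj⟩ w' ⟨hw'S, hw'adj⟩ hf
    by_contra hne
    have hdot : dotZ w w' = 0 := tf_orth hS.2.1 hv hwS hw'S hwadj hw'adj hne
    obtain ⟨p, q, hpq, d, hd, rfl⟩ := (dnVertex_iff w).mp (hS.1 w hwS)
    obtain ⟨r, s, hrs, c, hc, rfl⟩ := (dnVertex_iff w').mp (hS.1 w' hw'S)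
    have hf1 : (vec n p q d i ≠ 0) ↔ (vec n r s c i ≠ 0) :=
      not_iff_not.mpr (by simpa [decide_eq_decide] using congrArg Prod.fst hf)
    have hf2 : (∑ k, vec n p q d k = 0) ↔ (∑ k, vec n r s c k = 0) := by
      have := congrArg Prod.snd hf
      simpa [decide_eq_decide] using this
    rw [vec_coord_ne hpq hd, vec_coord_ne hrs hc] at hf1
    have hsh1 := adj_shares hij hpq he hd hwadj.1 hwadj.2
    have hsh2 := adj_shares hij hrs he hc hw'adj.1 hw'adj.2
    have hsh : (p : ℕ) = r ∨ (p : ℕ) = s ∨ (q : ℕ) = r ∨ (q : ℕ) = s := by omega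
    obtain ⟨h1, h2, h3⟩ := orth_shared hpq hrs hd hc hdot hsh
    rw [sum_vec d (Fin.ne_of_lt hpq), sum_vec c (Fin.ne_of_lt hrs)] at hf2
    rcases hd with rfl | rfl <;> omega
  have hle := Set.ncard_le_ncard_of_injOn _ (fun a _ => Set.mem_univ _) hinj Set.finite_univ
  simpa [Set.ncard_univ, Nat.card_eq_fintype_card] using hle

set_option maxHeartbeats 2000000 in
lemma neighbours_eq {n : ℕ} {S : Set (Fin n → ℤ)} (hS : MaximalTriangleFree S)
    {v a b : Fin n → ℤ} (hv : v ∈ S) (ha : a ∈ S) (hb : b ∈ S)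
    (hva : DnAdj v a) (hvb : DnAdj v b) (hab : a ≠ b) (hnc : ¬ DnConj b a) :
    ∃ a' b', DnConj a a' ∧ DnConj b b' ∧
      {w ∈ S | DnAdj v w} = {a, b, a', b'} ∧
      Set.ncard ({a, b, a', b'} : Set (Fin n → ℤ)) = 4 := by
  classical
  obtain ⟨i, j, hij, e, he, rfl⟩ := (dnVertex_iff v).mp (hS.1 v hv)
  obtain ⟨p, q, hpq, d, hd, rfl⟩ := (dnVertex_iff a).mp (hS.1 a ha)
  obtain ⟨r, s, hrs, c, hc, rfl⟩ := (dnVertex_iff b).mp (hS.1 b hb)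
  have hd' : -d = 1 ∨ -d = -1 := by rcases hd with rfl | rfl <;> simp
  have hc' : -c = 1 ∨ -c = -1 := by rcases hc with rfl | rfl <;> simp
  refine ⟨vec n p q (-d), vec n r s (-c), dnConj_vec hpq hd, dnConj_vec hrs hc, ?_, ?_⟩
  · -- set equality
    have hsva := adj_supp_ne hij hpq he hd hva
    have hsvb := adj_supp_ne hij hrs he hc hvb
    have ha' : vec n p q (-d) ∈ S := conj_mem hS hpq hd ha
    have hb' : vec n r s (-c) ∈ S := conj_mem hS hrs hc hb
    have hva' : DnAdj (vec n i j e) (vec n p q (-d)) := by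
      refine ⟨?_, ?_⟩
      · intro heq
        obtain ⟨h1, h2, -⟩ := vec_inj hij hpq he hd' heq
        exact hsva ⟨congrArg Fin.val h1, congrArg Fin.val h2⟩
      · have h0 : dotZ (vec n p q d) (vec n i j e) ≠ 0 := by
          rw [dotZ_comm]; exact hva.2
        have := dot_conj_ne_zero hpq hij hd he
          (fun ⟨x, y⟩ => hsva ⟨x.symm, y.symm⟩) h0
        rw [dotZ_comm]; exact this
    have hvb' : DnAdj (vec n i j e) (vec n r s (-c)) := by
      refine ⟨?_, ?_⟩
      · intro heq
        obtain ⟨h1, h2, -⟩ := vec_inj hij hrs he hc' heq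
        exact hsvb ⟨congrArg Fin.val h1, congrArg Fin.val h2⟩
      · have h0 : dotZ (vec n r s c) (vec n i j e) ≠ 0 := by
          rw [dotZ_comm]; exact hvb.2
        have := dot_conj_ne_zero hrs hij hc he
          (fun ⟨x, y⟩ => hsvb ⟨x.symm, y.symm⟩) h0
        rw [dotZ_comm]; exact this
    ext w
    simp only [Set.mem_setOf_eq, Set.mem_insert_iff, Set.mem_singleton_iff]
    constructor
    · rintro ⟨hwS, hwadj⟩
      by_cases hw1 : w = vec n p q d
      · exact Or.inl hw1
      by_cases hw2 : w = vec n r s c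
      · exact Or.inr (Or.inl hw2)
      obtain ⟨p2, q2, hpq2, d2, hd2, rfl⟩ := (dnVertex_iff w).mp (hS.1 w hwS)
      have hdota : dotZ (vec n p2 q2 d2) (vec n p q d) = 0 :=
        tf_orth hS.2.1 hv hwS ha hwadj hva hw1
      have hdotb : dotZ (vec n p2 q2 d2) (vec n r s c) = 0 :=
        tf_orth hS.2.1 hv hwS hb hwadj hvb hw2
      have hdotab : dotZ (vec n p q d) (vec n r s c) = 0 :=
        tf_orth hS.2.1 hv ha hb hva hvb hab
      have contraAB : ((p : ℕ) = r ∨ (p : ℕ) = s ∨ (q : ℕ) = r ∨ (q : ℕ) = s) → False := by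
        intro hsh
        obtain ⟨h1, h2, h3⟩ := orth_shared hpq hrs hd hc hdotab hsh
        have hbeq : vec n r s c = vec n p q (-d) := by
          rw [show r = p from (Fin.ext h1).symm, show s = q from (Fin.ext h2).symm, h3]
        exact hnc (dnConj_symm (hbeq ▸ dnConj_vec hpq hd))
      have wa : ((p2 : ℕ) = p ∨ (p2 : ℕ) = q ∨ (q2 : ℕ) = p ∨ (q2 : ℕ) = q) →
          vec n p2 q2 d2 = vec n p q (-d) := by
        intro hsh
        obtain ⟨h1, h2, h3⟩ := orth_shared hpq2 hpq hd2 hd hdota hsh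
        rw [show p2 = p from Fin.ext h1, show q2 = q from Fin.ext h2,
          show d2 = -d from by omega]
      have wb : ((p2 : ℕ) = r ∨ (p2 : ℕ) = s ∨ (q2 : ℕ) = r ∨ (q2 : ℕ) = s) →
          vec n p2 q2 d2 = vec n r s (-c) := by
        intro hsh
        obtain ⟨h1, h2, h3⟩ := orth_shared hpq2 hrs hd2 hc hdotb hsh
        rw [show p2 = r from Fin.ext h1, show q2 = s from Fin.ext h2,
          show d2 = -c from by omega]
      rcases adj_shares hij hpq he hd hva.1 hva.2 with ⟨haI, haJ⟩ | ⟨haI, haJ⟩ <;>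
        rcases adj_shares hij hrs he hc hvb.1 hvb.2 with ⟨hbI, hbJ⟩ | ⟨hbI, hbJ⟩ <;>
          rcases adj_shares hij hpq2 he hd2 hwadj.1 hwadj.2 with ⟨hwI, hwJ⟩ | ⟨hwI, hwJ⟩
      · exact (contraAB (by omega)).elim
      · exact (contraAB (by omega)).elim
      · exact Or.inr (Or.inr (Or.inl (wa (by omega))))
      · exact Or.inr (Or.inr (Or.inr (wb (by omega))))
      · exact Or.inr (Or.inr (Or.inr (wb (by omega))))
      · exact Or.inr (Or.inr (Or.inl (wa (by omega))))
      · exact (contraAB (by omega)).elim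
      · exact (contraAB (by omega)).elim
    · rintro (rfl | rfl | rfl | rfl)
      · exact ⟨ha, hva⟩
      · exact ⟨hb, hvb⟩
      · exact ⟨ha', hva'⟩
      · exact ⟨hb', hvb'⟩
  · -- cardinality
    have d2' : vec n p q d ≠ vec n p q (-d) := by
      intro h
      obtain ⟨-, -, h3⟩ := vec_inj hpq hpq hd hd' h
      rcases hd with rfl | rfl <;> omega
    have d3' : vec n p q d ≠ vec n r s (-c) := by
      intro h
      exact hnc (h ▸ dnConj_vec hrs hc)
    have d4' : vec n p q (-d) ≠ vec n r s c := by
      intro h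
      exact hnc (dnConj_symm (h ▸ dnConj_vec hpq hd))
    have d5' : vec n p q (-d) ≠ vec n r s (-c) := by
      intro h
      obtain ⟨h1, h2, h3⟩ := vec_inj hpq hrs hd' hc' h
      exact hab (by rw [h1, h2, show d = c from by omega])
    have d6' : vec n r s c ≠ vec n r s (-c) := by
      intro h
      obtain ⟨-, -, h3⟩ := vec_inj hrs hrs hc hc' h
      rcases hc with rfl | rfl <;> omega
    rw [Set.ncard_insert_of_notMem (by simp [hab, d2', d3']),
      Set.ncard_insert_of_notMem (by simp [Ne.symm d4', d6']),
      Set.ncard_pair d5']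


/-- In a maximal triangle-free subgraph `S` of `𝒟_n`, every vertex has
at most four neighbours in `S`; moreover if `v ∈ S` has two distinct neighbours
`a, b ∈ S` with `a ≠ b*`, then the neighbours of `v` in `S` are exactly
`a, b, a*, b*` (four of them). -/
theorem maximal_triangle_free_degree_four
    {n : ℕ} (hn : 2 ≤ n) (S : Set (Fin n → ℤ))
    (hS : MaximalTriangleFree S) :
    (∀ v ∈ S, Set.ncard {w ∈ S | DnAdj v w} ≤ 4) ∧
    (∀ v ∈ S, ∀ a ∈ S, ∀ b ∈ S, DnAdj v a → DnAdj v b → a ≠ b → ¬ DnConj b a →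
      ∃ a' b', DnConj a a' ∧ DnConj b b' ∧
        {w ∈ S | DnAdj v w} = {a, b, a', b'} ∧
        Set.ncard ({a, b, a', b'} : Set (Fin n → ℤ)) = 4) :=
  ⟨fun v hv => deg_le_four hS hv,
   fun v hv a ha b hb hva hvb hab hnc => neighbours_eq hS hv ha hb hva hvb hab hnc⟩
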